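/- Let r > 1 be a real number. Then the number of connected components of the topological closure of σ_{−r}(ℕ⁺) in ℝ is at least π(r) + 1, where π(r) is the number of primes less than or equal to r. -/

import Mathlib

open scoped BigOperators
open Finset

/-- The divisor function `σ_{-r}(n) = ∑_{d ∣ n} d^{-r}`. -/
noncomputable def sigmaNeg (r : ℝ) (n : ℕ) : ℝ := ∑ d ∈ n.divisors, (d : ℝ) ^ (-r)

/-- The range `σ_{-r}(ℕ⁺) = {σ_{-r}(n) : n ∈ ℕ⁺}`. -/
def sigmaSet (r : ℝ) : Set ℝ := {x | ∃ n : ℕ, 0 < n ∧ x = sigmaNeg r n}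

/-- `π(x)`: the number of primes `p ≤ x`, for a real argument `x`. -/
noncomputable def primePi (x : ℝ) : ℕ := {p : ℕ | p.Prime ∧ (p : ℝ) ≤ x}.ncard


open Finset

lemma Icc_succ_insert (a b : ℕ) (h : a ≤ b + 1) : Icc a (b+1) = insert (b+1) (Icc a b) := by
  rw [← Finset.Ico_insert_right h, Finset.Ico_add_one_right_eq_Icc]

noncomputable def cfun (N : ℕ) : ℝ := if 2 ∣ N then (2*(N:ℝ))⁻¹ else (2*(N:ℝ)+2)⁻¹

lemma sum_odd_aux : ∀ N : ℕ, 3 ≤ N →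
    ∑ d ∈ (Icc 3 N).filter (fun d => ¬ 2 ∣ d), ((d:ℝ)^2)⁻¹ ≤ 17/72 - cfun N := by
  refine Nat.le_induction ?_ ?_
  · simp [cfun, show ¬ (2:ℕ) ∣ 3 by decide, Finset.filter_singleton]
    norm_num
  · intro N hN ih
    rw [Icc_succ_insert 3 N (by omega), Finset.filter_insert]
    by_cases h2 : 2 ∣ (N+1)
    · rw [if_neg (not_not_intro h2)]
      have hc : cfun (N+1) = cfun N := by
        have hN2 : ¬ 2 ∣ N := by omega
        simp only [cfun, if_pos h2, if_neg hN2]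
        push_cast; ring_nf
      rw [hc]; exact ih
    · rw [if_pos h2, Finset.sum_insert (by simp)]
      have h2N : 2 ∣ N := by omega
      have hN0 : (0:ℝ) < N := by exact_mod_cast Nat.pos_of_ne_zero (by omega)
      have hc : cfun N - cfun (N+1) = ((N:ℝ)*((N:ℝ)+2))⁻¹ := by
        simp only [cfun, if_pos h2N, if_neg h2]
        push_cast
        rw [inv_sub_inv (by positivity) (by positivity)]
        rw [div_eq_iff (by positivity)]
        field_simp
        ring
      have hterm : (((N:ℝ)+1)^2)⁻¹ ≤ ((N:ℝ)*((N:ℝ)+2))⁻¹ := by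
        apply inv_anti₀ (by positivity)
        nlinarith
      push_cast
      linarith [hterm]

lemma sum_odd_le (N : ℕ) :
    ∑ d ∈ (Icc 3 N).filter (fun d => ¬ 2 ∣ d), ((d:ℝ)^2)⁻¹ ≤ 17/72 := by
  rcases le_or_gt 3 N with h | h
  · have := sum_odd_aux N h
    have hc : 0 ≤ cfun N := by
      unfold cfun; split <;> positivity
    linarith
  · have : Icc 3 N = ∅ := by
      apply Finset.Icc_eq_empty; omega
    rw [this]; simp; norm_num

lemma bernoulli_pow (x : ℝ) (hx : 0 ≤ x) (m : ℕ) : 1 + m * x ≤ (1+x)^m :=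
  one_add_mul_le_pow (by linarith) m

lemma tail_step (m : ℕ) (hm : 2 ≤ m) (n : ℝ) (hn : 1 ≤ n) :
    (m:ℝ) * (((n+1))^(m+1))⁻¹ ≤ ((n)^m)⁻¹ - ((n+1)^m)⁻¹ := by
  have hn0 : 0 < n := by linarith
  have hA : (0:ℝ) < n^m := by positivity
  have hB : (0:ℝ) < (n+1)^m := by positivity
  have h2 : (n+1)^m = n^m * (1+1/n)^m := by
    rw [← mul_pow]; congr 1; field_simp
  have h1 : 1 + (m:ℝ) * (1/n) ≤ (1+1/n)^m := bernoulli_pow _ (by positivity) m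
  have h3 : (m:ℝ) * n^m ≤ n * ((n+1)^m - n^m) := by
    rw [h2]
    have := mul_le_mul_of_nonneg_left h1 (le_of_lt hA)
    calc (m:ℝ) * n^m = n * (n^m * (1 + m*(1/n)) - n^m) := by field_simp; ring
    _ ≤ n * (n^m * (1+1/n)^m - n^m) := by
        apply mul_le_mul_of_nonneg_left _ (le_of_lt hn0)
        linarith
  have hsub : ((n)^m)⁻¹ - ((n+1)^m)⁻¹ = ((n+1)^m - n^m) / (n^m * (n+1)^m) := by
    field_simp
  have hBA : 0 ≤ (n+1)^m - n^m := by nlinarith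
  rw [hsub, pow_succ, ← div_eq_mul_inv, div_le_div_iff₀ (by positivity) (by positivity)]
  nlinarith [mul_le_mul_of_nonneg_right h3 hB.le, mul_nonneg (mul_nonneg hBA hB.le) hn0.le]

lemma tail_sum_aux (m : ℕ) (hm : 2 ≤ m) : ∀ N : ℕ, m + 2 ≤ N →
    ∑ d ∈ Icc (m+3) N, ((d:ℝ)^(m+1))⁻¹ ≤ (((m:ℝ)+2)^m)⁻¹ / m - (((N:ℝ))^m)⁻¹ / m := by
  have hmpos : (0:ℝ) < m := by exact_mod_cast Nat.pos_of_ne_zero (by omega)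
  refine Nat.le_induction ?_ ?_
  · have he : Icc (m+3) (m+2) = ∅ := by apply Finset.Icc_eq_empty; omega
    rw [he]
    push_cast
    simp
  · intro N hN ih
    rw [Icc_succ_insert (m+3) N (by omega), Finset.sum_insert (by simp)]
    have hstep := tail_step m hm (N:ℝ) (by exact_mod_cast Nat.one_le_iff_ne_zero.mpr (by omega))
    have h4 : (((N:ℝ)+1)^(m+1))⁻¹ ≤ ((N:ℝ)^m)⁻¹/m - (((N:ℝ)+1)^m)⁻¹/m := by
      rw [← sub_div, le_div_iff₀ hmpos, mul_comm]
      exact hstep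
    push_cast
    linarith [ih]

lemma tail_sum (m : ℕ) (hm : 2 ≤ m) (N : ℕ) :
    ∑ d ∈ Icc (m+3) N, ((d:ℝ)^(m+1))⁻¹ ≤ (((m:ℝ)+2)^m)⁻¹ / m := by
  rcases le_or_gt (m+2) N with h | h
  · have := tail_sum_aux m hm N h
    have : (0:ℝ) ≤ (((N:ℝ))^m)⁻¹ / m := by positivity
    linarith [tail_sum_aux m hm N h]
  · have he : Icc (m+3) N = ∅ := by apply Finset.Icc_eq_empty; omega
    rw [he]; simp; positivity

lemma theta_lt_one (m : ℕ) (hm : 2 ≤ m) :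
    ((m:ℝ)+1)^(m+1) * ((((m:ℝ)+2)^m)⁻¹ / m) < 1 := by
  have h1 : 1 + (m:ℝ) * (1/((m:ℝ)+1)) ≤ (1+1/((m:ℝ)+1))^m := bernoulli_pow _ (by positivity) m
  have h2 : ((m:ℝ)+2)^m = ((m:ℝ)+1)^m * (1+1/((m:ℝ)+1))^m := by
    rw [← mul_pow]; congr 1; field_simp; ring
  have hmpos : (0:ℝ) < m := by exact_mod_cast Nat.pos_of_ne_zero (by omega)
  have hm2 : (2:ℝ) ≤ m := by exact_mod_cast hm
  have hC : (0:ℝ) < ((m:ℝ)+1)^m := by positivity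
  have key : ((m:ℝ)+1)^(m+1) < (m:ℝ) * (((m:ℝ)+2)^m) := by
    rw [h2, pow_succ]
    have hmd : (m:ℝ)+1 < (m:ℝ) * (1+1/((m:ℝ)+1))^m := by
      have : (m:ℝ) * (1 + (m:ℝ)*(1/((m:ℝ)+1))) ≤ (m:ℝ) * (1+1/((m:ℝ)+1))^m :=
        mul_le_mul_of_nonneg_left h1 hmpos.le
      have hx : ((m:ℝ)+1) < (m:ℝ) * (1 + (m:ℝ)*(1/((m:ℝ)+1))) := by
        rw [show (m:ℝ) * (1 + (m:ℝ)*(1/((m:ℝ)+1))) = ((m:ℝ)*((m:ℝ)+1) + (m:ℝ)^2)/((m:ℝ)+1) from by field_simp]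
        rw [lt_div_iff₀ (by positivity)]
        nlinarith
      linarith
    calc ((m:ℝ)+1)^m * ((m:ℝ)+1) < ((m:ℝ)+1)^m * ((m:ℝ) * (1+1/((m:ℝ)+1))^m) :=
          mul_lt_mul_of_pos_left hmd hC
    _ = (m:ℝ) * (((m:ℝ)+1)^m * (1+1/((m:ℝ)+1))^m) := by ring
  have hEq : ((m:ℝ)+1)^(m+1) * ((((m:ℝ)+2)^m)⁻¹ / m) = ((m:ℝ)+1)^(m+1) / ((((m:ℝ)+2)^m) * m) := by
    field_simp
  rw [hEq, div_lt_one (by positivity)]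
  linarith [key]

lemma sigmaNeg_one (r : ℝ) : sigmaNeg r 1 = 1 := by
  simp [sigmaNeg, Nat.divisors_one]

lemma sigmaNeg_prime (r : ℝ) {q : ℕ} (hq : q.Prime) : sigmaNeg r q = 1 + (q:ℝ)^(-r) := by
  rw [sigmaNeg, hq.divisors, Finset.sum_pair hq.one_lt.ne]
  simp

lemma sigmaNeg_lower (r : ℝ) {l n : ℕ} (hl : 2 ≤ l) (hn : 0 < n) (hd : l ∣ n) :
    1 + (l:ℝ)^(-r) ≤ sigmaNeg r n := by
  have hsub : ({1, l} : Finset ℕ) ⊆ n.divisors := by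
    intro x hx
    rcases Finset.mem_insert.mp hx with h | h
    · subst h; exact Nat.one_mem_divisors.mpr hn.ne'
    · rw [Finset.mem_singleton] at h; subst h
      exact Nat.mem_divisors.mpr ⟨hd, hn.ne'⟩
  calc 1 + (l:ℝ)^(-r) = ∑ d ∈ ({1, l} : Finset ℕ), (d:ℝ)^(-r) := by
        rw [Finset.sum_pair (by omega)]; simp
  _ ≤ sigmaNeg r n := Finset.sum_le_sum_of_subset_of_nonneg hsub (by
        intro i hi _
        have : i ≠ 0 := (Nat.pos_of_mem_divisors hi).ne'
        positivity)

lemma rpow_base_shift {c d r s : ℝ} (hc : 0 < c) (hcd : c ≤ d) (hsr : s ≤ r) :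
    d^(-r) ≤ c^(-r) * (c^s * (d^s)⁻¹) := by
  have hd : 0 < d := lt_of_lt_of_le hc hcd
  have h1 : d^(-r) = c^(-r) * (d/c)^(-r) := by
    rw [← Real.mul_rpow hc.le (by positivity)]
    rw [mul_div_cancel₀ _ hc.ne']
  have h2 : (d/c)^(-r) ≤ (d/c)^(-s) :=
    Real.rpow_le_rpow_of_exponent_le ((one_le_div hc).mpr hcd) (neg_le_neg hsr)
  have h3 : (d/c)^(-s) = c^s * (d^s)⁻¹ := by
    rw [Real.rpow_neg (by positivity), Real.div_rpow hd.le hc.le, inv_div, div_eq_mul_inv]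
  rw [h1, ← h3]
  exact mul_le_mul_of_nonneg_left h2 (Real.rpow_nonneg hc.le _)

noncomputable def theta (q : ℕ) : ℝ :=
  if q = 2 then 17/18 else (q:ℝ)^(q:ℕ) * ((((q:ℝ)+1)^(q-1:ℕ))⁻¹ / ((q:ℝ)-1))

lemma prime_ge_three {q : ℕ} (hq : q.Prime) (h2 : q ≠ 2) : 3 ≤ q := by
  have := hq.two_le; omega

lemma theta_nonneg {q : ℕ} (hq : q.Prime) : 0 ≤ theta q := by
  unfold theta; split
  · norm_num
  · rename_i h2
    have h3 : (3:ℝ) ≤ q := by exact_mod_cast prime_ge_three hq h2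
    have : (0:ℝ) < (q:ℝ) - 1 := by linarith
    positivity

lemma theta_lt_one' {q : ℕ} (hq : q.Prime) : theta q < 1 := by
  unfold theta; split
  · norm_num
  · rename_i h2
    have h3 : 3 ≤ q := prime_ge_three hq h2
    obtain ⟨m, rfl⟩ : ∃ m, q = m + 1 := ⟨q - 1, by omega⟩
    have hm : 2 ≤ m := by omega
    have := theta_lt_one m hm
    have hc1 : ((m+1 : ℕ) : ℝ) = (m:ℝ) + 1 := by push_cast; ring
    rw [hc1, Nat.add_sub_cancel]
    rw [show (m:ℝ) + 1 + 1 = (m:ℝ) + 2 from by ring, show (m:ℝ) + 1 - 1 = (m:ℝ) from by ring]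
    exact this

lemma sigmaNeg_upper (r : ℝ) {q : ℕ} (hq : q.Prime) (hqr : (q:ℝ) ≤ r) {n : ℕ} (hn : 0 < n)
    (hall : ∀ l, l.Prime → l ∣ n → q < l) :
    sigmaNeg r n ≤ 1 + theta q * (q:ℝ)^(-r) := by
  have h1mem : 1 ∈ n.divisors := Nat.one_mem_divisors.mpr hn.ne'
  have hsplit : sigmaNeg r n = 1 + ∑ d ∈ n.divisors.erase 1, (d:ℝ)^(-r) := by
    rw [sigmaNeg, ← Finset.add_sum_erase _ _ h1mem]
    simp
  rw [hsplit]
  have hdfact : ∀ d ∈ n.divisors.erase 1, 2 ≤ d ∧ d ≤ n ∧ ∀ l, l.Prime → l ∣ d → q < l := by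
    intro d hd
    obtain ⟨hd1, hdn⟩ := Finset.mem_erase.mp hd
    obtain ⟨hdvd, _⟩ := Nat.mem_divisors.mp hdn
    have hdpos : 0 < d := Nat.pos_of_mem_divisors hdn
    refine ⟨by omega, Nat.le_of_dvd hn hdvd, fun l hl hld => hall l hl (hld.trans hdvd)⟩
  have hnonneg : ∀ (s : Finset ℕ), (0:ℝ) ≤ ∑ d ∈ s, ((d:ℝ)^(q:ℕ))⁻¹ := by
    intro s; apply Finset.sum_nonneg; intro i _; positivity
  by_cases h2 : q = 2
  · subst h2
    have hsub : n.divisors.erase 1 ⊆ (Finset.Icc 3 n).filter (fun d => ¬ 2 ∣ d) := by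
      intro d hd
      obtain ⟨hd2, hdn, hdp⟩ := hdfact d hd
      have hodd : ¬ 2 ∣ d := fun h => absurd (hdp 2 Nat.prime_two h) (by omega)
      have hd3 : 3 ≤ d := by omega
      exact Finset.mem_filter.mpr ⟨Finset.mem_Icc.mpr ⟨hd3, hdn⟩, hodd⟩
    set F := (Finset.Icc 3 n).filter (fun d => ¬ 2 ∣ d) with hF
    have step1 : ∑ d ∈ n.divisors.erase 1, (d:ℝ)^(-r) ≤ ∑ d ∈ F, (d:ℝ)^(-r) := by
      apply Finset.sum_le_sum_of_subset_of_nonneg hsub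
      intro i hi _
      have : 3 ≤ i := (Finset.mem_Icc.mp (Finset.mem_filter.mp hi).1).1
      have : (0:ℝ) < i := by positivity
      positivity
    have step2 : ∑ d ∈ F, (d:ℝ)^(-r) ≤ ∑ d ∈ F, (2:ℝ)^(-r) * (4 * ((d:ℝ)^(2:ℕ))⁻¹) := by
      apply Finset.sum_le_sum
      intro d hd
      have hd3 : 3 ≤ d := (Finset.mem_Icc.mp (Finset.mem_filter.mp hd).1).1
      have hd3' : (3:ℝ) ≤ (d:ℝ) := by exact_mod_cast hd3
      have := rpow_base_shift (c := 2) (d := (d:ℝ)) (r := r) (s := ((2:ℕ):ℝ))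
        two_pos (by linarith) (by exact_mod_cast hqr)
      rw [Real.rpow_natCast, Real.rpow_natCast] at this
      rw [show (4:ℝ) = (2:ℝ)^(2:ℕ) by norm_num]; exact this
    have step3 : ∑ d ∈ F, (2:ℝ)^(-r) * (4 * ((d:ℝ)^(2:ℕ))⁻¹)
        = (2:ℝ)^(-r) * 4 * ∑ d ∈ F, ((d:ℝ)^(2:ℕ))⁻¹ := by
      rw [Finset.mul_sum]
      apply Finset.sum_congr rfl
      intro d _; ring
    have step4 : (2:ℝ)^(-r) * 4 * ∑ d ∈ F, ((d:ℝ)^(2:ℕ))⁻¹ ≤ (2:ℝ)^(-r) * 4 * (17/72) := by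
      apply mul_le_mul_of_nonneg_left (sum_odd_le n) (by positivity)
    have hc2 : ((2:ℕ):ℝ) = (2:ℝ) := by norm_num
    have hth : theta 2 * ((2:ℕ):ℝ)^(-r) = (2:ℝ)^(-r) * 4 * (17/72) := by
      unfold theta; rw [hc2]; norm_num; ring
    rw [hth]
    linarith [step1, step2.trans (le_of_eq step3) |>.trans step4]
  · have h3 : 3 ≤ q := prime_ge_three hq h2
    obtain ⟨m, rfl⟩ : ∃ m, q = m + 1 := ⟨q - 1, by omega⟩
    have hm : 2 ≤ m := by omega
    have hqcast : ((m+1:ℕ):ℝ) = (m:ℝ)+1 := by push_cast; ring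
    have hsub : n.divisors.erase 1 ⊆ Finset.Icc (m+3) n := by
      intro d hd
      obtain ⟨hd2, hdn, hdp⟩ := hdfact d hd
      have hmf : (d.minFac).Prime := Nat.minFac_prime (by omega)
      have hmfd : d.minFac ∣ d := Nat.minFac_dvd d
      have hgt : m + 1 < d.minFac := hdp _ hmf hmfd
      have hle : d.minFac ≤ d := Nat.minFac_le (by omega)
      have hoddq : ¬ 2 ∣ (m+1) := by
        intro h
        rcases (hq.eq_one_or_self_of_dvd 2 h) with h' | h' <;> omega
      have hne : d ≠ m + 2 := by
        intro h
        have heven : 2 ∣ d := by omega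
        exact absurd (hdp 2 Nat.prime_two heven) (by omega)
      exact Finset.mem_Icc.mpr ⟨by omega, hdn⟩
    set F := Finset.Icc (m+3) n with hF
    set Q : ℝ := ((m:ℝ)+1) with hQ
    have hQ3 : (3:ℝ) ≤ Q := by
      rw [hQ]; have : (2:ℝ) ≤ (m:ℝ) := by exact_mod_cast hm
      linarith
    have step1 : ∑ d ∈ n.divisors.erase 1, (d:ℝ)^(-r) ≤ ∑ d ∈ F, (d:ℝ)^(-r) := by
      apply Finset.sum_le_sum_of_subset_of_nonneg hsub
      intro i hi _
      have h3i : m+3 ≤ i := (Finset.mem_Icc.mp hi).1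
      have : (0:ℝ) < i := by
        have : 0 < i := by omega
        exact_mod_cast this
      positivity
    have step2 : ∑ d ∈ F, (d:ℝ)^(-r) ≤ ∑ d ∈ F, Q^(-r) * (Q^((m+1:ℕ)) * ((d:ℝ)^((m+1:ℕ)))⁻¹) := by
      apply Finset.sum_le_sum
      intro d hd
      have hd3 : m+3 ≤ d := (Finset.mem_Icc.mp hd).1
      have hd3' : ((m:ℝ))+3 ≤ (d:ℝ) := by exact_mod_cast hd3
      have := rpow_base_shift (c := Q) (d := (d:ℝ)) (r := r) (s := ((m+1:ℕ):ℝ))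
        (by linarith) (by rw [hQ]; linarith) (by rw [← hqcast] at *; exact_mod_cast hqr)
      rw [Real.rpow_natCast, Real.rpow_natCast] at this
      exact this
    have step3 : ∑ d ∈ F, Q^(-r) * (Q^((m+1:ℕ)) * ((d:ℝ)^((m+1:ℕ)))⁻¹)
        = Q^(-r) * Q^((m+1:ℕ)) * ∑ d ∈ F, ((d:ℝ)^((m+1:ℕ)))⁻¹ := by
      rw [Finset.mul_sum]
      apply Finset.sum_congr rfl
      intro d _; ring
    have hQr : (0:ℝ) ≤ Q^(-r) := Real.rpow_nonneg (by linarith) _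
    have step4 : Q^(-r) * Q^((m+1:ℕ)) * ∑ d ∈ F, ((d:ℝ)^((m+1:ℕ)))⁻¹
        ≤ Q^(-r) * Q^((m+1:ℕ)) * ((((m:ℝ)+2)^m)⁻¹ / m) := by
      apply mul_le_mul_of_nonneg_left (tail_sum m hm n) (by positivity)
    have hth : theta (m+1) * ((m+1:ℕ):ℝ)^(-r) = Q^(-r) * Q^((m+1:ℕ)) * ((((m:ℝ)+2)^m)⁻¹ / m) := by
      unfold theta
      rw [if_neg h2, Nat.add_sub_cancel, hqcast]
      rw [show (m:ℝ)+1+1 = (m:ℝ)+2 from by ring, show (m:ℝ)+1-1 = (m:ℝ) from by ring]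
      rw [hQ]; ring
    rw [hth]
    linarith [step1, (step2.trans (le_of_eq step3)).trans step4]

lemma rpow_neg_anti {r : ℝ} (hr : 0 < r) {p q : ℕ} (hp : 0 < p) (h : p < q) :
    (q:ℝ)^(-r) < (p:ℝ)^(-r) := by
  have hp' : (0:ℝ) < p := by exact_mod_cast hp
  have hq' : (0:ℝ) < q := by exact_mod_cast hp.trans h
  rw [Real.rpow_neg hp'.le, Real.rpow_neg hq'.le]
  have : (p:ℝ)^r < (q:ℝ)^r := Real.rpow_lt_rpow hp'.le (by exact_mod_cast h) hr
  exact inv_strictAnti₀ (Real.rpow_pos_of_pos hp' r) this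

lemma dichotomy (r : ℝ) {q : ℕ} (hq : q.Prime) (hqr : (q:ℝ) ≤ r) (n : ℕ) (hn : 0 < n) :
    sigmaNeg r n ≤ 1 + theta q * (q:ℝ)^(-r) ∨ 1 + (q:ℝ)^(-r) ≤ sigmaNeg r n := by
  have hr0 : (0:ℝ) ≤ r := by
    have : (2:ℝ) ≤ q := by exact_mod_cast hq.two_le
    linarith
  by_cases h : ∀ l, l.Prime → l ∣ n → q < l
  · left; exact sigmaNeg_upper r hq hqr hn h
  · right
    push_neg at h
    obtain ⟨l, hl, hld, hlq⟩ := h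
    have hlow := sigmaNeg_lower r hl.two_le hn hld
    have hmono : (q:ℝ)^(-r) ≤ (l:ℝ)^(-r) := by
      rcases eq_or_lt_of_le hlq with h' | h'
      · rw [h']
      · exact (rpow_neg_anti (by
          have : (2:ℝ) ≤ q := by exact_mod_cast hq.two_le
          linarith) hl.pos h').le
    linarith

lemma gap (r : ℝ) {q : ℕ} (hq : q.Prime) (hqr : (q:ℝ) ≤ r) :
    ∃ t : ℝ, 1 < t ∧ t < 1 + (q:ℝ)^(-r) ∧ t ∉ closure (sigmaSet r) ∧
      (∀ p : ℕ, p.Prime → q < p → 1 + (p:ℝ)^(-r) < t) := by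
  have hθ0 := theta_nonneg hq
  have hθ1 := theta_lt_one' hq
  have hq0 : (0:ℝ) < q := by exact_mod_cast hq.pos
  have hqpos : (0:ℝ) < (q:ℝ)^(-r) := Real.rpow_pos_of_pos hq0 _
  set lo := 1 + theta q * (q:ℝ)^(-r) with hlo
  set hi := 1 + (q:ℝ)^(-r) with hhi
  have hlh : lo < hi := by rw [hlo, hhi]; nlinarith
  set t := (lo + hi)/2 with ht
  have hlot : lo < t := by rw [ht]; linarith
  have hthi : t < hi := by rw [ht]; linarith
  have h1t : 1 < t := by
    have : 1 ≤ lo := by rw [hlo]; nlinarith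
    linarith
  have hsubc : closure (sigmaSet r) ⊆ (Set.Ioo lo hi)ᶜ := by
    apply closure_minimal _ (isOpen_Ioo.isClosed_compl)
    rintro x ⟨n, hn, rfl⟩ hx
    rcases dichotomy r hq hqr n hn with h | h
    · exact absurd hx.1 (by rw [hlo]; linarith)
    · exact absurd hx.2 (by rw [hhi]; linarith)
  refine ⟨t, h1t, hthi, fun hc => (hsubc hc) ⟨hlot, hthi⟩, ?_⟩
  intro p hp hqp
  have hup : sigmaNeg r p ≤ lo := by
    apply sigmaNeg_upper r hq hqr hp.pos
    intro l hl hld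
    rcases (Nat.Prime.eq_one_or_self_of_dvd hp l hld) with h' | h'
    · exact absurd h' hl.ne_one
    · omega
  rw [sigmaNeg_prime r hp] at hup
  linarith

lemma components_ne {C : Set ℝ} {a b : C} {t : ℝ} (hat : (a:ℝ) < t) (htb : t < (b:ℝ))
    (ht : t ∉ C) : ConnectedComponents.mk a ≠ ConnectedComponents.mk b := by
  intro h
  rw [ConnectedComponents.coe_eq_coe'] at h
  have hpc : IsPreconnected (Subtype.val '' connectedComponent b) :=
    (isPreconnected_connectedComponent).image _ continuous_subtype_val.continuousOn
  have hIcc := hpc.Icc_subset ⟨a, h, rfl⟩ ⟨b, mem_connectedComponent, rfl⟩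
  have : t ∈ Subtype.val '' connectedComponent b := hIcc ⟨hat.le, htb.le⟩
  obtain ⟨x, -, rfl⟩ := this
  exact ht x.2

/-- The number of connected components of the closure of `σ_{-r}(ℕ⁺)` is at least `π(r) + 1`,
where `π(r)` is the number of primes `≤ r`. -/
theorem stmt_2 (r : ℝ) (hr : 1 < r) :
    ((primePi r + 1 : ℕ) : Cardinal) ≤
      Cardinal.mk (ConnectedComponents ↥(closure (sigmaSet r))) := by
  classical
  set C := closure (sigmaSet r) with hC
  set P : Set ℕ := {p : ℕ | p.Prime ∧ (p : ℝ) ≤ r} with hP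
  have hPfin : P.Finite := by
    apply Set.Finite.subset (Set.finite_Icc 0 ⌊r⌋₊)
    intro p hp
    simp only [Set.mem_Icc]
    exact ⟨Nat.zero_le _, Nat.le_floor hp.2⟩
  haveI := hPfin.fintype
  have hr0 : (0:ℝ) < r := by linarith
  have hmem : ∀ n : ℕ, 0 < n → sigmaNeg r n ∈ C := fun n hn => subset_closure ⟨n, hn, rfl⟩
  let u : Option P → C := fun o => match o with
    | none => ⟨1, by rw [← sigmaNeg_one r]; exact hmem 1 one_pos⟩
    | some p => ⟨sigmaNeg r p.1, hmem p.1 p.2.1.pos⟩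
  have hunone : ((u none : C) : ℝ) = 1 := rfl
  have husome : ∀ p : P, ((u (some p) : C) : ℝ) = 1 + ((p.1:ℝ))^(-r) := fun p =>
    sigmaNeg_prime r p.2.1
  let f : Option P → ConnectedComponents C := fun o => ConnectedComponents.mk (u o)
  have hge1 : ∀ a : Option P, 1 ≤ ((u a : C) : ℝ) := by
    intro a
    match a with
    | none => rw [hunone]
    | some p =>
      rw [husome p]
      have : (0:ℝ) < ((p.1:ℝ))^(-r) := Real.rpow_pos_of_pos (by exact_mod_cast p.2.1.pos) _
      linarith
  have hmain : ∀ a b : Option P, ((u a : C) : ℝ) < ((u b : C) : ℝ) → f a ≠ f b := by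
    intro a b hab
    match b with
    | none => exact absurd (lt_of_le_of_lt (hge1 a) (by rw [hunone] at hab; exact hab)) (lt_irrefl 1)
    | some qp =>
      obtain ⟨tq, htq1, htqhi, htqC, htqp⟩ := gap r qp.2.1 qp.2.2
      have hbt : tq < ((u (some qp) : C) : ℝ) := by rw [husome]; exact htqhi
      have hat : ((u a : C) : ℝ) < tq := by
        match a with
        | none => rw [hunone]; exact htq1
        | some pp =>
          rw [husome] at hab ⊢
          have hlt : ((pp.1:ℝ))^(-r) < ((qp.1:ℝ))^(-r) := by
            rw [husome] at hab; linarith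
          have hqlt : qp.1 < pp.1 := by
            by_contra hle
            push_neg at hle
            rcases eq_or_lt_of_le hle with h' | h'
            · rw [h'] at hlt; exact lt_irrefl _ hlt
            · exact absurd (rpow_neg_anti hr0 pp.2.1.pos h') (not_lt.mpr hlt.le)
          exact htqp pp.1 pp.2.1 hqlt
      exact components_ne hat hbt htqC
  have hinj : Function.Injective f := by
    intro a b hfab
    by_contra hne
    have hvne : ((u a : C) : ℝ) ≠ ((u b : C) : ℝ) := by
      match a, b with
      | none, none => exact absurd rfl hne
      | none, some q =>
        rw [hunone, husome]
        have : (0:ℝ) < ((q.1:ℝ))^(-r) := Real.rpow_pos_of_pos (by exact_mod_cast q.2.1.pos) _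
        intro h; linarith
      | some p, none =>
        rw [hunone, husome]
        have : (0:ℝ) < ((p.1:ℝ))^(-r) := Real.rpow_pos_of_pos (by exact_mod_cast p.2.1.pos) _
        intro h; linarith
      | some p, some q =>
        have hpq : p.1 ≠ q.1 := fun h => hne (by rw [Subtype.ext h])
        rw [husome, husome]
        intro h
        have h' : ((p.1:ℝ))^(-r) = ((q.1:ℝ))^(-r) := by linarith
        rcases Nat.lt_or_ge p.1 q.1 with hlt | hge
        · exact absurd h'.symm (rpow_neg_anti hr0 p.2.1.pos hlt).ne
        · rcases eq_or_lt_of_le hge with h'' | h''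
          · exact hpq h''.symm
          · exact absurd h' (rpow_neg_anti hr0 q.2.1.pos h'').ne
    rcases lt_trichotomy ((u a : C) : ℝ) ((u b : C) : ℝ) with h | h | h
    · exact hmain a b h hfab
    · exact hvne h
    · exact hmain b a h hfab.symm
  have hcard := Cardinal.mk_le_of_injective hinj
  rw [Cardinal.mk_option, Cardinal.mk_fintype] at hcard
  have hpi : primePi r = Fintype.card P := by
    rw [primePi, ← Nat.card_coe_set_eq, Nat.card_eq_fintype_card]
  rw [hpi]
  push_cast
  exact_mod_cast hcard
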